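/- Let K be an m×r real matrix of full column rank (r ≤ m), let w be a probability vector with w_i > 0 for all i, let λ ∈ (0,1], set d_i(w) = tr(M(w)^{-1} K (Kᵀ M(w)^{-1} K)^{-1} Kᵀ M(w)^{-1} A_i), and define w'_i = w_i d_i(w)^λ / Σ_j w_j d_j(w)^λ. If M(w) and M(w') are both positive definite, then det(Kᵀ M(w')^{-1} K) ≤ det(Kᵀ M(w)^{-1} K). (Monotonicity of the multiplicative algorithm for the D-criterion for Kᵀθ, φ_{0,K}(M) = -log det(Kᵀ M^{-1} K).) -/

import Mathlib

open Matrix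

open scoped MatrixOrder

noncomputable def Matrix.PosSemidef.sqrt {k : ℕ} {X : Matrix (Fin k) (Fin k) ℝ}
    (_h : X.PosSemidef) : Matrix (Fin k) (Fin k) ℝ := CFC.sqrt X

lemma Matrix.PosSemidef.posSemidef_sqrt {k : ℕ} {X : Matrix (Fin k) (Fin k) ℝ}
    (h : X.PosSemidef) : h.sqrt.PosSemidef := (CFC.sqrt_nonneg X).posSemidef

lemma Matrix.PosSemidef.sqrt_mul_self {k : ℕ} {X : Matrix (Fin k) (Fin k) ℝ}
    (h : X.PosSemidef) : h.sqrt * h.sqrt = X := CFC.sqrt_mul_sqrt_self X h.nonneg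

private lemma trace_transpose_mul_eq_sum' {m r : ℕ} (E F : Matrix (Fin m) (Fin r) ℝ) :
    (Eᵀ * F).trace = ∑ p : Fin r × Fin m, E p.2 p.1 * F p.2 p.1 := by
  rw [Fintype.sum_prod_type]
  simp only [Matrix.trace, Matrix.diag, Matrix.mul_apply, Matrix.transpose_apply]

private lemma trace_transpose_mul_self_nonneg' {m r : ℕ} (E : Matrix (Fin m) (Fin r) ℝ) :
    0 ≤ (Eᵀ * E).trace := by
  rw [trace_transpose_mul_eq_sum']
  exact Finset.sum_nonneg fun p _ => mul_self_nonneg _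

private lemma trace_cauchy_schwarz' {m r : ℕ} (E F : Matrix (Fin m) (Fin r) ℝ) :
    (Eᵀ * F).trace ≤ Real.sqrt ((Eᵀ * E).trace * (Fᵀ * F).trace) := by
  have h2 : ((Eᵀ * F).trace) ^ 2 ≤ (Eᵀ * E).trace * (Fᵀ * F).trace := by
    rw [trace_transpose_mul_eq_sum', trace_transpose_mul_eq_sum', trace_transpose_mul_eq_sum']
    simpa [pow_two] using Finset.sum_mul_sq_le_sq_mul_sq Finset.univ
      (fun p : Fin r × Fin m => E p.2 p.1) (fun p => F p.2 p.1)
  calc (Eᵀ * F).trace ≤ |(Eᵀ * F).trace| := le_abs_self _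
    _ = Real.sqrt (((Eᵀ * F).trace) ^ 2) := (Real.sqrt_sq_eq_abs _).symm
    _ ≤ _ := Real.sqrt_le_sqrt h2

private lemma chebyshev_sum' {n : ℕ} (w a b : Fin n → ℝ) (hw : ∀ i, 0 ≤ w i)
    (hw1 : ∑ i, w i = 1) (hmono : ∀ i j, 0 ≤ (a i - a j) * (b i - b j)) :
    (∑ i, w i * a i) * (∑ i, w i * b i) ≤ ∑ i, w i * (a i * b i) := by
  have key : 0 ≤ ∑ i : Fin n, ∑ j : Fin n, w i * w j * ((a i - a j) * (b i - b j)) :=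
    Finset.sum_nonneg fun i _ => Finset.sum_nonneg fun j _ =>
      mul_nonneg (mul_nonneg (hw i) (hw j)) (hmono i j)
  have expand : ∑ i : Fin n, ∑ j : Fin n, w i * w j * ((a i - a j) * (b i - b j))
      = ((∑ i, w i * (a i * b i)) * (∑ i, w i) + (∑ i, w i) * (∑ i, w i * (a i * b i))
        - (∑ i, w i * a i) * (∑ i, w i * b i)) - (∑ i, w i * b i) * (∑ i, w i * a i) := by
    rw [Finset.sum_mul_sum, Finset.sum_mul_sum, Finset.sum_mul_sum, Finset.sum_mul_sum,
      ← Finset.sum_add_distrib, ← Finset.sum_sub_distrib, ← Finset.sum_sub_distrib]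
    exact Finset.sum_congr rfl fun i _ => by
      rw [← Finset.sum_add_distrib, ← Finset.sum_sub_distrib, ← Finset.sum_sub_distrib]
      exact Finset.sum_congr rfl fun j _ => by ring
  rw [expand, hw1] at key
  nlinarith [key]

private lemma trace_eq_sum_eigenvalues' {r : ℕ} (Y : Matrix (Fin r) (Fin r) ℝ)
    (hY : Y.IsHermitian) : Y.trace = ∑ i, hY.eigenvalues i := by
  nth_rewrite 1 [hY.spectral_theorem]
  rw [Unitary.conjStarAlgAut_apply]
  rw [Matrix.trace_mul_cycle]
  rw [(Matrix.mem_unitaryGroup_iff').mp (Matrix.IsHermitian.eigenvectorUnitary hY).2]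
  rw [Matrix.one_mul, Matrix.trace_diagonal]
  simp

private lemma det_le_trace_div_pow' {r : ℕ} (hr : 0 < r) (Y : Matrix (Fin r) (Fin r) ℝ)
    (hY : Y.PosSemidef) : Y.det ≤ (Y.trace / r) ^ r := by
  have hev := hY.eigenvalues_nonneg
  have hdet : Y.det = ∏ i, hY.1.eigenvalues i := by
    rw [hY.1.det_eq_prod_eigenvalues]; norm_num
  have htr : Y.trace = ∑ i, hY.1.eigenvalues i := trace_eq_sum_eigenvalues' Y hY.1
  have amgm := Real.geom_mean_le_arith_mean_weighted Finset.univ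
    (fun _ : Fin r => (r : ℝ)⁻¹) hY.1.eigenvalues
    (fun i _ => by positivity) (by simp [Finset.card_univ]; field_simp) (fun i _ => hev i)
  have hprod : (∏ i, hY.1.eigenvalues i ^ ((r : ℝ)⁻¹)) ^ r = ∏ i, hY.1.eigenvalues i := by
    rw [← Finset.prod_pow]
    exact Finset.prod_congr rfl fun i _ => by
      rw [← Real.rpow_natCast (hY.1.eigenvalues i ^ ((r:ℝ)⁻¹)) r, ← Real.rpow_mul (hev i)]
      rw [inv_mul_cancel₀ (by positivity), Real.rpow_one]
  have hsum : ∑ i, (r : ℝ)⁻¹ * hY.1.eigenvalues i = Y.trace / r := by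
    rw [htr, ← Finset.mul_sum]; ring
  rw [hsum] at amgm
  calc Y.det = (∏ i, hY.1.eigenvalues i ^ ((r : ℝ)⁻¹)) ^ r := by rw [hprod, hdet]
    _ ≤ (Y.trace / r) ^ r :=
        pow_le_pow_left₀ (Finset.prod_nonneg fun i _ => Real.rpow_nonneg (hev i) _) amgm r

private lemma mulVec_injective_of_rank' {m r : ℕ} (K : Matrix (Fin m) (Fin r) ℝ)
    (hK : K.rank = r) : ∀ x : Fin r → ℝ, K *ᵥ x = 0 → x = 0 := by
  have h := LinearMap.finrank_range_add_finrank_ker K.mulVecLin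
  rw [Module.finrank_fintype_fun_eq_card, Fintype.card_fin] at h
  have hk0 : Module.finrank ℝ (LinearMap.ker K.mulVecLin) = 0 := by
    have : K.rank = Module.finrank ℝ (LinearMap.range K.mulVecLin) := rfl
    omega
  have hker : LinearMap.ker K.mulVecLin = ⊥ := Submodule.finrank_eq_zero.mp hk0
  intro x hx
  have hx' : x ∈ LinearMap.ker K.mulVecLin := by
    simpa [LinearMap.mem_ker, Matrix.mulVecLin_apply] using hx
  simpa [hker] using hx'

private lemma posDef_conj_rect' {m r : ℕ} {N : Matrix (Fin m) (Fin m) ℝ} (hN : N.PosDef)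
    (K : Matrix (Fin m) (Fin r) ℝ) (hKinj : ∀ x : Fin r → ℝ, K *ᵥ x = 0 → x = 0) :
    (Kᵀ * N * K).PosDef := by
  refine Matrix.PosDef.of_dotProduct_mulVec_pos ?_ ?_
  · have h1 : Nᵀ = N := by
      rw [← Matrix.conjTranspose_eq_transpose_of_trivial]; exact hN.1
    show (Kᵀ * N * K)ᴴ = Kᵀ * N * K
    rw [Matrix.conjTranspose_eq_transpose_of_trivial]
    rw [Matrix.transpose_mul, Matrix.transpose_mul, Matrix.transpose_transpose, h1,
      Matrix.mul_assoc]
  · intro x hx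
    have hKx : K *ᵥ x ≠ 0 := fun h => hx (hKinj x h)
    have := hN.dotProduct_mulVec_pos hKx
    simpa [star_trivial, Matrix.mulVec_mulVec, Matrix.dotProduct_mulVec,
      ← Matrix.vecMul_vecMul, Matrix.vecMul_transpose, Matrix.mul_assoc] using this

private lemma herm_transpose' {k : ℕ} {X : Matrix (Fin k) (Fin k) ℝ} (h : X.IsHermitian) :
    Xᵀ = X := by
  rw [← Matrix.conjTranspose_eq_transpose_of_trivial]; exact h

set_option maxHeartbeats 1000000 in
/-- Monotonicity of the multiplicative algorithm for the D-criterion for `Kᵀθ`,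
`φ_{0,K}(M) = -log det(Kᵀ M⁻¹ K)`, for every power `lam ∈ (0,1]`. -/
theorem stmt_3 {n m r : ℕ} (hn : 0 < n) (hm : 0 < m) (hr : 0 < r) (hrm : r ≤ m)
    (A : Fin n → Matrix (Fin m) (Fin m) ℝ) (hA : ∀ i, (A i).PosSemidef)
    (M : (Fin n → ℝ) → Matrix (Fin m) (Fin m) ℝ)
    (hM : ∀ v : Fin n → ℝ, M v = ∑ i, v i • A i)
    (K : Matrix (Fin m) (Fin r) ℝ) (hK : K.rank = r)
    (w : Fin n → ℝ) (hw : ∀ i, 0 < w i) (hw1 : ∑ i, w i = 1)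
    (lam : ℝ) (hlam0 : 0 < lam) (hlam1 : lam ≤ 1)
    (d : Fin n → ℝ)
    (hd : ∀ i, d i =
      ((M w)⁻¹ * K * (Kᵀ * (M w)⁻¹ * K)⁻¹ * Kᵀ * (M w)⁻¹ * A i).trace)
    (w' : Fin n → ℝ)
    (hw' : ∀ i, w' i = w i * d i ^ lam / ∑ j, w j * d j ^ lam)
    (hMwpos : (M w).PosDef) (hMw'pos : (M w').PosDef) :
    (Kᵀ * (M w')⁻¹ * K).det ≤ (Kᵀ * (M w)⁻¹ * K).det := by
  have hKinj := mulVec_injective_of_rank' K hK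
  have hM0inv : (M w)⁻¹.PosDef := hMwpos.inv
  have hM1inv : (M w')⁻¹.PosDef := hMw'pos.inv
  have hGpd : (Kᵀ * (M w)⁻¹ * K).PosDef := posDef_conj_rect' hM0inv K hKinj
  have hG'pd : (Kᵀ * (M w')⁻¹ * K).PosDef := posDef_conj_rect' hM1inv K hKinj
  have hGipd : (Kᵀ * (M w)⁻¹ * K)⁻¹.PosDef := hGpd.inv
  have hdet0 : IsUnit (M w).det := isUnit_iff_ne_zero.mpr hMwpos.det_pos.ne'
  have hdet1 : IsUnit (M w').det := isUnit_iff_ne_zero.mpr hMw'pos.det_pos.ne'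
  have hdetG : IsUnit (Kᵀ * (M w)⁻¹ * K).det := isUnit_iff_ne_zero.mpr hGpd.det_pos.ne'
  have hM0it : ((M w)⁻¹)ᵀ = (M w)⁻¹ := herm_transpose' hM0inv.1
  have hM1it : ((M w')⁻¹)ᵀ = (M w')⁻¹ := herm_transpose' hM1inv.1
  set R : Matrix (Fin r) (Fin r) ℝ := hGipd.posSemidef.sqrt with hRdef
  have hRt : Rᵀ = R := herm_transpose' hGipd.posSemidef.posSemidef_sqrt.isHermitian
  have hRR : R * R = (Kᵀ * (M w)⁻¹ * K)⁻¹ := hGipd.posSemidef.sqrt_mul_self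
  have hSt : ∀ i, ((hA i).sqrt)ᵀ = (hA i).sqrt :=
    fun i => herm_transpose' ((hA i).posSemidef_sqrt).isHermitian
  have hSS : ∀ i, (hA i).sqrt * (hA i).sqrt = A i := fun i => (hA i).sqrt_mul_self
  set E : Fin n → Matrix (Fin m) (Fin r) ℝ :=
    fun i => (hA i).sqrt * ((M w)⁻¹ * (K * R)) with hEdef
  set F : Fin n → Matrix (Fin m) (Fin r) ℝ :=
    fun i => (hA i).sqrt * ((M w')⁻¹ * (K * R)) with hFdef
  set S : ℝ := ∑ j, w j * d j ^ lam with hSdef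
  -- expansion helpers
  have hexpand : ∀ (L : Matrix (Fin r) (Fin m) ℝ) (Y : Matrix (Fin m) (Fin r) ℝ)
      (v : Fin n → ℝ), L * (M v * Y) = ∑ i, v i • (L * (A i * Y)) := by
    intro L Y v
    rw [hM v, Matrix.sum_mul, Matrix.mul_sum]
    exact Finset.sum_congr rfl fun i _ => by
      rw [Matrix.smul_mul, Matrix.mul_smul]
  have hexpand_tr : ∀ (B : Matrix (Fin m) (Fin m) ℝ) (v : Fin n → ℝ),
      (B * M v).trace = ∑ i, v i * (B * A i).trace := by
    intro B v
    rw [hM v, Matrix.mul_sum, Matrix.trace_sum]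
    exact Finset.sum_congr rfl fun i _ => by
      rw [Matrix.mul_smul, Matrix.trace_smul, smul_eq_mul]
  -- transposes of E and F
  have hEt : ∀ i, (E i)ᵀ = (R * (Kᵀ * (M w)⁻¹)) * (hA i).sqrt := by
    intro i
    simp only [hEdef, Matrix.transpose_mul, Matrix.transpose_transpose, hM0it, hRt, hSt,
      Matrix.mul_assoc]
  have hFt : ∀ i, (F i)ᵀ = (R * (Kᵀ * (M w')⁻¹)) * (hA i).sqrt := by
    intro i
    simp only [hFdef, Matrix.transpose_mul, Matrix.transpose_transpose, hM1it, hRt, hSt,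
      Matrix.mul_assoc]
  have hEtF : ∀ i, (E i)ᵀ * F i
      = (R * (Kᵀ * (M w)⁻¹)) * (A i * ((M w')⁻¹ * (K * R))) := by
    intro i
    rw [hEt i]
    simp only [hFdef, Matrix.mul_assoc]
    rw [← Matrix.mul_assoc ((hA i).sqrt) ((hA i).sqrt), hSS i]
    try simp only [Matrix.mul_assoc]
  have hFtF : ∀ i, (F i)ᵀ * F i
      = (R * (Kᵀ * (M w')⁻¹)) * (A i * ((M w')⁻¹ * (K * R))) := by
    intro i
    rw [hFt i]
    simp only [hFdef, Matrix.mul_assoc]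
    rw [← Matrix.mul_assoc ((hA i).sqrt) ((hA i).sqrt), hSS i]
    try simp only [Matrix.mul_assoc]
  have hEtE : ∀ i, (E i)ᵀ * E i
      = (R * (Kᵀ * (M w)⁻¹)) * (A i * ((M w)⁻¹ * (K * R))) := by
    intro i
    rw [hEt i]
    simp only [hEdef, Matrix.mul_assoc]
    rw [← Matrix.mul_assoc ((hA i).sqrt) ((hA i).sqrt), hSS i]
    try simp only [Matrix.mul_assoc]
  -- d i = trace ((E i)ᵀ * E i)
  have hdform : ∀ i, d i = ((E i)ᵀ * E i).trace := by
    intro i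
    rw [hEtE i, hd i]
    rw [Matrix.trace_mul_comm _ (A i), Matrix.trace_mul_comm _ (A i * ((M w)⁻¹ * (K * R)))]
    congr 1
    rw [Matrix.mul_assoc (A i)]
    congr 1
    simp only [Matrix.mul_assoc]
    rw [← Matrix.mul_assoc R R, hRR]
    simp only [Matrix.mul_assoc]
  have hd0 : ∀ i, 0 ≤ d i := fun i => (hdform i) ▸ trace_transpose_mul_self_nonneg' (E i)
  have hc0 : ∀ i, 0 ≤ ((F i)ᵀ * F i).trace := fun i => trace_transpose_mul_self_nonneg' (F i)
  -- ∑ w d = r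
  have hsum_wd : ∑ i, w i * d i = (r : ℝ) := by
    have h1 : ∑ i, w i * d i
        = (((M w)⁻¹ * K * (Kᵀ * (M w)⁻¹ * K)⁻¹ * Kᵀ * (M w)⁻¹) * M w).trace := by
      rw [hexpand_tr]
      exact Finset.sum_congr rfl fun i _ => by rw [hd i, Matrix.mul_assoc]
    rw [h1]
    have h2 : ((M w)⁻¹ * K * (Kᵀ * (M w)⁻¹ * K)⁻¹ * Kᵀ * (M w)⁻¹) * M w
        = (M w)⁻¹ * (K * ((Kᵀ * (M w)⁻¹ * K)⁻¹ * Kᵀ)) := by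
      simp only [Matrix.mul_assoc]
      rw [Matrix.nonsing_inv_mul _ hdet0]
      simp only [Matrix.mul_one]
    rw [h2, Matrix.trace_mul_comm]
    have h3 : K * ((Kᵀ * (M w)⁻¹ * K)⁻¹ * Kᵀ) * (M w)⁻¹
        = K * ((Kᵀ * (M w)⁻¹ * K)⁻¹ * (Kᵀ * (M w)⁻¹)) := by
      simp only [Matrix.mul_assoc]
    rw [h3, Matrix.trace_mul_comm]
    have h4 : (Kᵀ * (M w)⁻¹ * K)⁻¹ * (Kᵀ * (M w)⁻¹) * K
        = (Kᵀ * (M w)⁻¹ * K)⁻¹ * (Kᵀ * (M w)⁻¹ * K) := by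
      simp only [Matrix.mul_assoc]
    rw [h4, Matrix.nonsing_inv_mul _ hdetG, Matrix.trace_one]
    simp
  -- S > 0
  have hS0 : 0 < S := by
    have hrpos : (0 : ℝ) < (r : ℝ) := by exact_mod_cast hr
    have hsum : (0 : ℝ) < ∑ i, w i * d i := by rw [hsum_wd]; exact hrpos
    have hex : ∃ i : Fin n, 0 < w i * d i := by
      by_contra hcon
      push_neg at hcon
      have : ∑ i, w i * d i ≤ 0 := Finset.sum_nonpos fun i _ => hcon i
      linarith
    obtain ⟨i0, hi0⟩ := hex
    have hdi0 : 0 < d i0 := by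
      rcases (hd0 i0).lt_or_eq with h | h
      · exact h
      · rw [← h, mul_zero] at hi0; exact absurd hi0 (lt_irrefl 0)
    rw [hSdef]
    apply Finset.sum_pos'
    · exact fun i _ => mul_nonneg (hw i).le (Real.rpow_nonneg (hd0 i) lam)
    · exact ⟨i0, Finset.mem_univ i0, mul_pos (hw i0) (Real.rpow_pos_of_pos hdi0 lam)⟩
  -- cancellation identities
  have key_cancel0 : (M w)⁻¹ * (M w * ((M w')⁻¹ * (K * R))) = (M w')⁻¹ * (K * R) := by
    rw [← Matrix.mul_assoc, Matrix.nonsing_inv_mul _ hdet0, Matrix.one_mul]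
  have key_cancel1 : (M w')⁻¹ * (M w' * ((M w')⁻¹ * (K * R))) = (M w')⁻¹ * (K * R) := by
    rw [← Matrix.mul_assoc, Matrix.nonsing_inv_mul _ hdet1, Matrix.one_mul]
  set G' : Matrix (Fin r) (Fin r) ℝ := Kᵀ * (M w')⁻¹ * K with hG'def
  set a : ℝ := ((Kᵀ * (M w)⁻¹ * K)⁻¹ * G').trace with hadef
  have hRGR : (Kᵀ * (M w)⁻¹ * K)⁻¹ * G' = R * (R * G') := by
    rw [← hRR, Matrix.mul_assoc]
  have hcommon : ((R * (Kᵀ * (M w')⁻¹)) * (K * R)).trace = a := by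
    have e2 : (R * (Kᵀ * (M w')⁻¹)) * (K * R) = (R * G') * R := by
      rw [hG'def]; simp only [Matrix.mul_assoc]
    rw [e2, Matrix.trace_mul_comm (R * G') R, ← Matrix.mul_assoc, hRR, hadef]
  have hT1 : ∑ i, w i * ((E i)ᵀ * F i).trace = a := by
    have hsumE : ∑ i, w i • ((E i)ᵀ * F i)
        = (R * (Kᵀ * (M w)⁻¹)) * (M w * ((M w')⁻¹ * (K * R))) := by
      rw [hexpand]
      exact Finset.sum_congr rfl fun i _ => by rw [hEtF i]
    have h := congrArg Matrix.trace hsumE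
    rw [Matrix.trace_sum] at h
    simp only [Matrix.trace_smul, smul_eq_mul] at h
    rw [h]
    have e1 : (R * (Kᵀ * (M w)⁻¹)) * (M w * ((M w')⁻¹ * (K * R)))
        = (R * (Kᵀ * (M w')⁻¹)) * (K * R) := by
      calc (R * (Kᵀ * (M w)⁻¹)) * (M w * ((M w')⁻¹ * (K * R)))
          = R * (Kᵀ * ((M w)⁻¹ * (M w * ((M w')⁻¹ * (K * R))))) := by
            simp only [Matrix.mul_assoc]
        _ = R * (Kᵀ * ((M w')⁻¹ * (K * R))) := by rw [key_cancel0]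
        _ = (R * (Kᵀ * (M w')⁻¹)) * (K * R) := by simp only [Matrix.mul_assoc]
    rw [e1, hcommon]
  have hT2 : ∑ i, w' i * ((F i)ᵀ * F i).trace = a := by
    have hsumF : ∑ i, w' i • ((F i)ᵀ * F i)
        = (R * (Kᵀ * (M w')⁻¹)) * (M w' * ((M w')⁻¹ * (K * R))) := by
      rw [hexpand]
      exact Finset.sum_congr rfl fun i _ => by rw [hFtF i]
    have h := congrArg Matrix.trace hsumF
    rw [Matrix.trace_sum] at h
    simp only [Matrix.trace_smul, smul_eq_mul] at h
    rw [h]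
    have e1 : (R * (Kᵀ * (M w')⁻¹)) * (M w' * ((M w')⁻¹ * (K * R)))
        = (R * (Kᵀ * (M w')⁻¹)) * (K * R) := by
      calc (R * (Kᵀ * (M w')⁻¹)) * (M w' * ((M w')⁻¹ * (K * R)))
          = R * (Kᵀ * ((M w')⁻¹ * (M w' * ((M w')⁻¹ * (K * R))))) := by
            simp only [Matrix.mul_assoc]
        _ = R * (Kᵀ * ((M w')⁻¹ * (K * R))) := by rw [key_cancel1]
        _ = (R * (Kᵀ * (M w')⁻¹)) * (K * R) := by simp only [Matrix.mul_assoc]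
    rw [e1, hcommon]
  -- scalar inequalities
  have hdd : ∀ i, d i ^ lam * d i ^ (1 - lam) = d i := by
    intro i
    rcases (hd0 i).eq_or_lt with h | h
    · rw [← h, Real.zero_rpow hlam0.ne', zero_mul]
    · rw [← Real.rpow_add h, show lam + (1 - lam) = 1 by ring, Real.rpow_one]
  have hstep : ∀ i, 2 * (w i * ((E i)ᵀ * F i).trace) - w' i * ((F i)ᵀ * F i).trace
      ≤ w i * (S * d i ^ (1 - lam)) := by
    intro i
    have hCS : ((E i)ᵀ * F i).trace ≤ Real.sqrt (d i * ((F i)ᵀ * F i).trace) := by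
      have h := trace_cauchy_schwarz' (E i) (F i)
      rwa [← hdform i] at h
    have hu : 0 ≤ d i ^ lam * ((F i)ᵀ * F i).trace / S :=
      div_nonneg (mul_nonneg (Real.rpow_nonneg (hd0 i) lam) (hc0 i)) hS0.le
    have hv : 0 ≤ S * d i ^ (1 - lam) :=
      mul_nonneg hS0.le (Real.rpow_nonneg (hd0 i) _)
    have huv : (d i ^ lam * ((F i)ᵀ * F i).trace / S) * (S * d i ^ (1 - lam))
        = d i * ((F i)ᵀ * F i).trace := by
      rw [div_mul_eq_mul_div, show d i ^ lam * ((F i)ᵀ * F i).trace * (S * d i ^ (1 - lam))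
          = S * ((d i ^ lam * d i ^ (1 - lam)) * ((F i)ᵀ * F i).trace) from by ring, hdd i,
        mul_div_cancel_left₀ _ hS0.ne']
    have hamgm : 2 * Real.sqrt (d i * ((F i)ᵀ * F i).trace)
        ≤ d i ^ lam * ((F i)ᵀ * F i).trace / S + S * d i ^ (1 - lam) := by
      have hs := sq_nonneg (Real.sqrt (d i ^ lam * ((F i)ᵀ * F i).trace / S)
        - Real.sqrt (S * d i ^ (1 - lam)))
      rw [sub_sq, Real.sq_sqrt hu, Real.sq_sqrt hv] at hs
      have hmul : Real.sqrt (d i ^ lam * ((F i)ᵀ * F i).trace / S)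
          * Real.sqrt (S * d i ^ (1 - lam))
          = Real.sqrt (d i * ((F i)ᵀ * F i).trace) := by
        rw [← Real.sqrt_mul hu, huv]
      nlinarith [hs, hmul]
    have hw'c : w' i * ((F i)ᵀ * F i).trace
        = w i * (d i ^ lam * ((F i)ᵀ * F i).trace / S) := by
      rw [hw' i]; ring
    have h2 : 2 * (w i * ((E i)ᵀ * F i).trace)
        ≤ 2 * (w i * Real.sqrt (d i * ((F i)ᵀ * F i).trace)) := by
      have h := mul_le_mul_of_nonneg_left hCS (hw i).le
      linarith
    calc 2 * (w i * ((E i)ᵀ * F i).trace) - w' i * ((F i)ᵀ * F i).trace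
        ≤ 2 * (w i * Real.sqrt (d i * ((F i)ᵀ * F i).trace))
            - w i * (d i ^ lam * ((F i)ᵀ * F i).trace / S) := by
          rw [hw'c]; linarith
      _ = w i * (2 * Real.sqrt (d i * ((F i)ᵀ * F i).trace)
            - d i ^ lam * ((F i)ᵀ * F i).trace / S) := by ring
      _ ≤ w i * (S * d i ^ (1 - lam)) := by
          apply mul_le_mul_of_nonneg_left _ (hw i).le
          linarith [hamgm]
  have hchb : S * ∑ i, w i * d i ^ (1 - lam) ≤ (r : ℝ) := by
    have hmono : ∀ i j, 0 ≤ (d i ^ lam - d j ^ lam) * (d i ^ (1-lam) - d j ^ (1-lam)) := by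
      intro i j
      rcases le_total (d i) (d j) with h | h
      · have h1 : d i ^ lam ≤ d j ^ lam := Real.rpow_le_rpow (hd0 i) h hlam0.le
        have h2 : d i ^ (1 - lam) ≤ d j ^ (1 - lam) :=
          Real.rpow_le_rpow (hd0 i) h (by linarith)
        nlinarith [h1, h2]
      · have h1 : d j ^ lam ≤ d i ^ lam := Real.rpow_le_rpow (hd0 j) h hlam0.le
        have h2 : d j ^ (1 - lam) ≤ d i ^ (1 - lam) :=
          Real.rpow_le_rpow (hd0 j) h (by linarith)
        nlinarith [h1, h2]
    have hcheb := chebyshev_sum' w (fun i => d i ^ lam) (fun i => d i ^ (1 - lam))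
      (fun i => (hw i).le) hw1 hmono
    calc S * ∑ i, w i * d i ^ (1 - lam)
        ≤ ∑ i, w i * (d i ^ lam * d i ^ (1 - lam)) := by rw [hSdef]; exact hcheb
      _ = ∑ i, w i * d i := Finset.sum_congr rfl fun i _ => by rw [hdd i]
      _ = (r : ℝ) := hsum_wd
  have ha_le_r : a ≤ (r : ℝ) := by
    have h1 : a = ∑ i, (2 * (w i * ((E i)ᵀ * F i).trace) - w' i * ((F i)ᵀ * F i).trace) := by
      rw [Finset.sum_sub_distrib]
      rw [show ∑ i, 2 * (w i * ((E i)ᵀ * F i).trace)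
          = 2 * ∑ i, w i * ((E i)ᵀ * F i).trace by rw [Finset.mul_sum]]
      rw [hT1, hT2]; ring
    rw [h1]
    calc ∑ i, (2 * (w i * ((E i)ᵀ * F i).trace) - w' i * ((F i)ᵀ * F i).trace)
        ≤ ∑ i, w i * (S * d i ^ (1 - lam)) := Finset.sum_le_sum fun i _ => hstep i
      _ = S * ∑ i, w i * d i ^ (1 - lam) := by
          rw [Finset.mul_sum]; exact Finset.sum_congr rfl fun i _ => by ring
      _ ≤ (r : ℝ) := hchb
  have ha0 : 0 ≤ a := by
    rw [← hT2]
    refine Finset.sum_nonneg fun i _ => mul_nonneg ?_ (hc0 i)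
    rw [hw' i]
    exact div_nonneg (mul_nonneg (hw i).le (Real.rpow_nonneg (hd0 i) lam)) hS0.le
  -- determinant conclusion
  have hRG'R_psd : (R * G' * R).PosSemidef := by
    have h := hG'pd.posSemidef.conjTranspose_mul_mul_same (B := R)
    rwa [Matrix.conjTranspose_eq_transpose_of_trivial, hRt] at h
  have htrRGR : (R * G' * R).trace = a := by
    rw [Matrix.trace_mul_comm (R * G') R, ← Matrix.mul_assoc, hRR, hadef]
  have hdetRGR : (R * G' * R).det = (Kᵀ * (M w)⁻¹ * K)⁻¹.det * G'.det := by
    rw [Matrix.det_mul, Matrix.det_mul, ← hRR, Matrix.det_mul]; ring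
  have hGGi : (Kᵀ * (M w)⁻¹ * K).det * ((Kᵀ * (M w)⁻¹ * K)⁻¹).det = 1 := by
    rw [← Matrix.det_mul, Matrix.mul_nonsing_inv _ hdetG, Matrix.det_one]
  have hrpos : (0 : ℝ) < (r : ℝ) := by exact_mod_cast hr
  have hpow : ((R * G' * R).trace / r) ^ r ≤ 1 := by
    rw [htrRGR]
    exact pow_le_one₀ (div_nonneg ha0 hrpos.le) ((div_le_one hrpos).mpr ha_le_r)
  calc G'.det = ((Kᵀ * (M w)⁻¹ * K).det * ((Kᵀ * (M w)⁻¹ * K)⁻¹).det) * G'.det := by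
        rw [hGGi, one_mul]
    _ = (Kᵀ * (M w)⁻¹ * K).det * (R * G' * R).det := by rw [hdetRGR]; ring
    _ ≤ (Kᵀ * (M w)⁻¹ * K).det * (((R * G' * R).trace / r) ^ r) := by
        exact mul_le_mul_of_nonneg_left
          (det_le_trace_div_pow' hr _ hRG'R_psd) hGpd.det_pos.le
    _ ≤ (Kᵀ * (M w)⁻¹ * K).det * 1 :=
        mul_le_mul_of_nonneg_left hpow hGpd.det_pos.le
    _ = (Kᵀ * (M w)⁻¹ * K).det := mul_one _
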